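/- arXiv:1801.05856 — 4 statements merged into one kernel-verified Lean document; each statement's English description precedes it below -/
import Mathlib

section
/- (Theorem 1, SBM likelihood) Let M be the modified adjacency matrix of a graph G with M_{ij} = log(p/q) if {i,j} is an edge and M_{ij} = log((1-p)/(1-q)) otherwise (i ≠ j), and M_{ii} = 0. Under the stochastic block model SBM(n, r, p, q) with labels drawn uniformly and independently, for any two labelings X, Y ∈ Δ_r^n, the ratio of posterior probabilities satisfies ℙ[X | M] / ℙ[Y | M] = exp( ((r-1)/(2r)) ( Tr(X^T M X) - Tr(Y^T M Y) ) ), where X and Y are the n×d matrices of simplex vector-labels. Equivalently, ℙ[X | M] ∝ exp( ((r-1)/(2r)) Tr(X^T M X) ). -/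
open Matrix

lemma sbm_sum_symm_aux (n : ℕ) (f : Fin n → Fin n → ℝ) (hsym : ∀ i j, f i j = f j i)
    (hdiag : ∀ i, f i i = 0) :
    ∑ i, ∑ j, f i j = ∑ i : Fin n, ∑ j : Fin n, if i < j then 2 * f i j else 0 := by
  have h1 : ∀ i j : Fin n, f i j =
      (if i < j then f i j else 0) + (if j < i then f i j else 0) := by
    intro i j
    rcases lt_trichotomy i j with h | h | h
    · simp [h, not_lt_of_gt h]
    · simp [h, hdiag]
    · simp [h, not_lt_of_gt h]
  calc ∑ i, ∑ j, f i j
      = (∑ i : Fin n, ∑ j : Fin n, if i < j then f i j else 0)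
        + (∑ i : Fin n, ∑ j : Fin n, if j < i then f i j else 0) := by
        rw [← Finset.sum_add_distrib]
        refine Finset.sum_congr rfl fun i _ => ?_
        rw [← Finset.sum_add_distrib]
        exact Finset.sum_congr rfl fun j _ => h1 i j
    _ = (∑ i : Fin n, ∑ j : Fin n, if i < j then f i j else 0)
        + (∑ i : Fin n, ∑ j : Fin n, if i < j then f i j else 0) := by
        congr 1
        rw [Finset.sum_comm]
        refine Finset.sum_congr rfl fun i _ => Finset.sum_congr rfl fun j _ => ?_
        by_cases h : i < j <;> simp [h, hsym i j]
    _ = ∑ i : Fin n, ∑ j : Fin n, if i < j then 2 * f i j else 0 := by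
        rw [← Finset.sum_add_distrib]
        refine Finset.sum_congr rfl fun i _ => ?_
        rw [← Finset.sum_add_distrib]
        refine Finset.sum_congr rfl fun j _ => ?_
        by_cases h : i < j
        · simp [h]; ring
        · simp [h]

lemma sbm_trace_aux (n d : ℕ) (X : Matrix (Fin n) (Fin d) ℝ) (M : Matrix (Fin n) (Fin n) ℝ) :
    Matrix.trace (Xᵀ * M * X) = ∑ i, ∑ j, M i j * dotProduct (X i) (X j) := by
  rw [Matrix.trace_mul_cycle Xᵀ M X]
  simp only [Matrix.trace, Matrix.diag, Matrix.mul_apply, dotProduct,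
    Matrix.transpose_apply, Finset.mul_sum, Finset.sum_mul]
  rw [Finset.sum_comm]
  exact Finset.sum_congr rfl fun i _ => Finset.sum_congr rfl fun j _ =>
    Finset.sum_congr rfl fun k _ => by ring


/-- The probability of observing the graph with edge relation `G` under the SBM,
conditionally on the labeling `σ` (product over unordered pairs). -/
noncomputable def SBMlikelihood (n r : ℕ) (p q : ℝ) (G : Fin n → Fin n → Prop)
    [DecidableRel G] (σ : Fin n → Fin r) : ℝ :=
  ∏ i : Fin n, ∏ j : Fin n,
    if i < j then
      (if G i j then (if σ i = σ j then p else q)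
       else (if σ i = σ j then 1 - p else 1 - q))
    else 1

/-- The posterior probability of the labeling `σ` given the graph `G`, under the uniform
prior on labelings (the uniform prior cancels in the normalization). -/
noncomputable def SBMposterior (n r : ℕ) (p q : ℝ) (G : Fin n → Fin n → Prop)
    [DecidableRel G] (σ : Fin n → Fin r) : ℝ :=
  SBMlikelihood n r p q G σ / ∑ τ : Fin n → Fin r, SBMlikelihood n r p q G τ

/-- Theorem 1 (SBM likelihood): the ratio of posterior probabilities of two labelings
X, Y given the modified adjacency matrix M equals exp(((r-1)/(2r))(Tr(XᵀMX) - Tr(YᵀMY))). -/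
theorem sbm_posterior_ratio (n r d : ℕ) (hr : 2 ≤ r) (p q : ℝ)
    (hq : 0 < q) (hqp : q < p) (hp : p < 1)
    (v : Fin r → Fin d → ℝ)
    (hunit : ∀ i, dotProduct (v i) (v i) = 1)
    (hinner : ∀ i j, i ≠ j → dotProduct (v i) (v j) = -1 / ((r : ℝ) - 1))
    (G : Fin n → Fin n → Prop) [DecidableRel G]
    (hsymm : Symmetric G) (hirr : Irreflexive G)
    (M : Matrix (Fin n) (Fin n) ℝ)
    (hM : ∀ i j, M i j = if i = j then 0 else
      if G i j then Real.log (p / q) else Real.log ((1 - p) / (1 - q)))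
    (σX σY : Fin n → Fin r)
    (X Y : Matrix (Fin n) (Fin d) ℝ)
    (hX : ∀ i, X i = v (σX i)) (hY : ∀ i, Y i = v (σY i)) :
    SBMposterior n r p q G σX / SBMposterior n r p q G σY
      = Real.exp ((((r : ℝ) - 1) / (2 * r)) *
          (Matrix.trace (Xᵀ * M * X) - Matrix.trace (Yᵀ * M * Y))) := by
  have hp0 : 0 < p := hq.trans hqp
  have hq1 : q < 1 := hqp.trans hp
  have h1p : 0 < 1 - p := by linarith
  have h1q : 0 < 1 - q := by linarith
  have hrR : (2:ℝ) ≤ (r:ℝ) := by exact_mod_cast hr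
  have hr0 : (0:ℝ) < r := by linarith
  have hr1 : (0:ℝ) < (r:ℝ) - 1 := by linarith
  set c : ℝ := ((r:ℝ) - 1) / (2 * r) with hc
  -- M is symmetric with zero diagonal
  have hMsymm : ∀ i j, M i j = M j i := by
    intro i j
    rw [hM, hM]
    by_cases h : i = j
    · simp [h]
    · have h' : ¬ j = i := fun hh => h hh.symm
      by_cases hG : G i j
      · simp [h, h', hG, hsymm hG]
      · have : ¬ G j i := fun hh => hG (hsymm hh)
        simp [h, h', hG, this]
  have hMdiag : ∀ i, M i i = 0 := by intro i; rw [hM]; simp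
  -- positivity of likelihoods
  have hpos : ∀ σ : Fin n → Fin r, 0 < SBMlikelihood n r p q G σ := by
    intro σ
    refine Finset.prod_pos fun i _ => Finset.prod_pos fun j _ => ?_
    split_ifs <;> linarith
  have hS : 0 < ∑ τ : Fin n → Fin r, SBMlikelihood n r p q G τ := by
    have : Nonempty (Fin r) := ⟨⟨0, by omega⟩⟩
    exact Finset.sum_pos (fun τ _ => hpos τ) Finset.univ_nonempty
  -- the key likelihood-ratio computation
  have main : ∀ σ τ : Fin n → Fin r,
      SBMlikelihood n r p q G σ / SBMlikelihood n r p q G τ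
        = Real.exp (c * ((∑ i, ∑ j, M i j * dotProduct (v (σ i)) (v (σ j)))
            - ∑ i, ∑ j, M i j * dotProduct (v (τ i)) (v (τ j)))) := by
    intro σ τ
    have hsymf : ∀ i j : Fin n,
        c * (M i j * (dotProduct (v (σ i)) (v (σ j))
          - dotProduct (v (τ i)) (v (τ j))))
        = c * (M j i * (dotProduct (v (σ j)) (v (σ i))
          - dotProduct (v (τ j)) (v (τ i)))) := fun i j => by
      rw [hMsymm i j, dotProduct_comm (v (σ i)), dotProduct_comm (v (τ i))]
    have hdiagf : ∀ i : Fin n,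
        c * (M i i * (dotProduct (v (σ i)) (v (σ i))
          - dotProduct (v (τ i)) (v (τ i)))) = 0 := fun i => by
      rw [hMdiag]; ring
    have hdiff : c * ((∑ i, ∑ j, M i j * dotProduct (v (σ i)) (v (σ j)))
            - ∑ i, ∑ j, M i j * dotProduct (v (τ i)) (v (τ j)))
        = ∑ i : Fin n, ∑ j : Fin n, if i < j then
            2 * (c * (M i j * (dotProduct (v (σ i)) (v (σ j))
              - dotProduct (v (τ i)) (v (τ j))))) else 0 := by
      rw [← sbm_sum_symm_aux n
        (fun i j => c * (M i j * (dotProduct (v (σ i)) (v (σ j))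
          - dotProduct (v (τ i)) (v (τ j))))) hsymf hdiagf]
      rw [mul_sub, Finset.mul_sum, Finset.mul_sum, ← Finset.sum_sub_distrib]
      refine Finset.sum_congr rfl fun i _ => ?_
      rw [Finset.mul_sum, Finset.mul_sum, ← Finset.sum_sub_distrib]
      exact Finset.sum_congr rfl fun j _ => by ring
    rw [hdiff, Real.exp_sum]
    unfold SBMlikelihood
    rw [← Finset.prod_div_distrib]
    refine Finset.prod_congr rfl fun i _ => ?_
    rw [Real.exp_sum, ← Finset.prod_div_distrib]
    refine Finset.prod_congr rfl fun j _ => ?_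
    by_cases hij : i < j
    · simp only [hij, if_true]
      have hne : i ≠ j := ne_of_lt hij
      have hMij : M i j = if G i j then Real.log (p / q)
          else Real.log ((1 - p) / (1 - q)) := by rw [hM]; simp [hne]
      by_cases hGij : G i j
      · rw [if_pos hGij] at hMij
        by_cases h1 : σ i = σ j <;> by_cases h2 : τ i = τ j
        · have hR : Real.exp (2 * (c * (M i j * (dotProduct (v (σ i)) (v (σ j))
              - dotProduct (v (τ i)) (v (τ j)))))) = (1:ℝ) := by
            rw [h1, h2, hunit, hunit]
            norm_num
          rw [hR]
          simp [hGij, h1, h2, div_self (ne_of_gt hp0)]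
        · have hR : Real.exp (2 * (c * (M i j * (dotProduct (v (σ i)) (v (σ j))
              - dotProduct (v (τ i)) (v (τ j)))))) = p / q := by
            rw [h1, hunit, hinner _ _ h2, hMij,
              show 2 * (c * (Real.log (p / q) * ((1:ℝ) - -1 / ((r:ℝ) - 1))))
                = Real.log (p / q) from by rw [hc]; field_simp; ring]
            exact Real.exp_log (by positivity)
          rw [hR]
          simp [hGij, h1, h2]
        · have hR : Real.exp (2 * (c * (M i j * (dotProduct (v (σ i)) (v (σ j))
              - dotProduct (v (τ i)) (v (τ j)))))) = q / p := by
            rw [h2, hunit, hinner _ _ h1, hMij,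
              show 2 * (c * (Real.log (p / q) * (-1 / ((r:ℝ) - 1) - (1:ℝ))))
                = -Real.log (p / q) from by rw [hc]; field_simp; ring,
              Real.exp_neg, Real.exp_log (by positivity), inv_div]
          rw [hR]
          simp [hGij, h1, h2]
        · have hR : Real.exp (2 * (c * (M i j * (dotProduct (v (σ i)) (v (σ j))
              - dotProduct (v (τ i)) (v (τ j)))))) = (1:ℝ) := by
            rw [hinner _ _ h1, hinner _ _ h2,
              show 2 * (c * (M i j * (-1 / ((r:ℝ) - 1) - -1 / ((r:ℝ) - 1)))) = 0 from by ring,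
              Real.exp_zero]
          rw [hR]
          simp [hGij, h1, h2, div_self (ne_of_gt hq)]
      · rw [if_neg hGij] at hMij
        by_cases h1 : σ i = σ j <;> by_cases h2 : τ i = τ j
        · have hR : Real.exp (2 * (c * (M i j * (dotProduct (v (σ i)) (v (σ j))
              - dotProduct (v (τ i)) (v (τ j)))))) = (1:ℝ) := by
            rw [h1, h2, hunit, hunit]
            norm_num
          rw [hR]
          simp [hGij, h1, h2, div_self (ne_of_gt h1p)]
        · have hR : Real.exp (2 * (c * (M i j * (dotProduct (v (σ i)) (v (σ j))
              - dotProduct (v (τ i)) (v (τ j)))))) = (1 - p) / (1 - q) := by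
            rw [h1, hunit, hinner _ _ h2, hMij,
              show 2 * (c * (Real.log ((1 - p) / (1 - q)) * ((1:ℝ) - -1 / ((r:ℝ) - 1))))
                = Real.log ((1 - p) / (1 - q)) from by rw [hc]; field_simp; ring]
            exact Real.exp_log (by positivity)
          rw [hR]
          simp [hGij, h1, h2]
        · have hR : Real.exp (2 * (c * (M i j * (dotProduct (v (σ i)) (v (σ j))
              - dotProduct (v (τ i)) (v (τ j)))))) = (1 - q) / (1 - p) := by
            rw [h2, hunit, hinner _ _ h1, hMij,
              show 2 * (c * (Real.log ((1 - p) / (1 - q)) * (-1 / ((r:ℝ) - 1) - (1:ℝ))))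
                = -Real.log ((1 - p) / (1 - q)) from by rw [hc]; field_simp; ring,
              Real.exp_neg, Real.exp_log (by positivity), inv_div]
          rw [hR]
          simp [hGij, h1, h2]
        · have hR : Real.exp (2 * (c * (M i j * (dotProduct (v (σ i)) (v (σ j))
              - dotProduct (v (τ i)) (v (τ j)))))) = (1:ℝ) := by
            rw [hinner _ _ h1, hinner _ _ h2,
              show 2 * (c * (M i j * (-1 / ((r:ℝ) - 1) - -1 / ((r:ℝ) - 1)))) = 0 from by ring,
              Real.exp_zero]
          rw [hR]
          simp [hGij, h1, h2, div_self (ne_of_gt h1q)]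
    · simp [hij]
  -- put everything together
  have htr : Matrix.trace (Xᵀ * M * X)
      = ∑ i, ∑ j, M i j * dotProduct (v (σX i)) (v (σX j)) := by
    rw [sbm_trace_aux]
    exact Finset.sum_congr rfl fun i _ => Finset.sum_congr rfl fun j _ => by
      rw [hX i, hX j]
  have htrY : Matrix.trace (Yᵀ * M * Y)
      = ∑ i, ∑ j, M i j * dotProduct (v (σY i)) (v (σY j)) := by
    rw [sbm_trace_aux]
    exact Finset.sum_congr rfl fun i _ => Finset.sum_congr rfl fun j _ => by
      rw [hY i, hY j]
  have hcancel : SBMposterior n r p q G σX / SBMposterior n r p q G σY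
      = SBMlikelihood n r p q G σX / SBMlikelihood n r p q G σY := by
    unfold SBMposterior
    rw [div_div_div_eq]
    rw [mul_comm (SBMlikelihood n r p q G σX)]
    exact mul_div_mul_left _ _ (ne_of_gt hS)
  rw [hcancel, htr, htrY] at *
  rw [main σX σY, htr, htrY]
end

section
/- (Key algebraic identity behind Theorem 1) For any graph G on n nodes with edge set e and any labeling X ∈ Δ_r^n, with M the modified adjacency matrix (M_{ij} = log(p/q) on edges, log((1-p)/(1-q)) on non-edges, 0 on the diagonal, 0 < q < p < 1), the log-likelihood satisfies: e_in(X) log p + (P_in(X) - e_in(X)) log(1-p) + e_out(X) log q + (P_out(X) - e_out(X)) log(1-q) = ((r-1)/(2r)) Tr(X^T M X) + C(G, p, q, n), where P_in(X) = Σ_u C(g_u,2), P_out(X) = Σ_{u<v} g_u g_v, and C(G,p,q,n) is a constant depending only on G, p, q, n (not on X). -/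
open Matrix

/-- Number of monochromatic edges (unordered). -/
def eIn (n r : ℕ) (e : Fin n → Fin n → Prop) [DecidableRel e] (σ : Fin n → Fin r) : ℕ :=
  (Finset.univ.filter fun p : Fin n × Fin n => p.1 < p.2 ∧ e p.1 p.2 ∧ σ p.1 = σ p.2).card

/-- Number of bichromatic edges (unordered). -/
def eOut (n r : ℕ) (e : Fin n → Fin n → Prop) [DecidableRel e] (σ : Fin n → Fin r) : ℕ :=
  (Finset.univ.filter fun p : Fin n × Fin n => p.1 < p.2 ∧ e p.1 p.2 ∧ σ p.1 ≠ σ p.2).card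

/-- Number of monochromatic unordered node pairs: Σ_u C(g_u, 2). -/
def pIn (n r : ℕ) (σ : Fin n → Fin r) : ℕ :=
  ∑ u : Fin r, ((Finset.univ.filter fun i => σ i = u).card).choose 2

/-- Number of bichromatic unordered node pairs: Σ_{u<v} g_u g_v. -/
def pOut (n r : ℕ) (σ : Fin n → Fin r) : ℕ :=
  ∑ u : Fin r, ∑ w : Fin r,
    if u < w then
      (Finset.univ.filter fun i => σ i = u).card *
        (Finset.univ.filter fun i => σ i = w).card
    else 0


lemma two_mul_choose_two_add (g : ℕ) : 2 * g.choose 2 + g = g * g := by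
  induction g with
  | zero => rfl
  | succ m ih =>
    rw [Nat.choose_succ_succ, Nat.choose_one_right]
    have h : (m+1) * (m+1) = m * m + 2*m + 1 := by ring
    linarith

lemma card_ne_two_mul {n : ℕ} (P : Fin n × Fin n → Prop) [DecidablePred P]
    (hP : ∀ p : Fin n × Fin n, P p → P p.swap) :
    (Finset.univ.filter fun p : Fin n × Fin n => p.1 ≠ p.2 ∧ P p).card =
      2 * (Finset.univ.filter fun p : Fin n × Fin n => p.1 < p.2 ∧ P p).card := by
  have hdisj : Disjoint (Finset.univ.filter fun p : Fin n × Fin n => p.1 < p.2 ∧ P p)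
      (Finset.univ.filter fun p : Fin n × Fin n => p.2 < p.1 ∧ P p) := by
    rw [Finset.disjoint_left]
    intro p hp hq
    simp only [Finset.mem_filter] at hp hq
    exact absurd hq.2.1 (asymm hp.2.1)
  have hunion : (Finset.univ.filter fun p : Fin n × Fin n => p.1 ≠ p.2 ∧ P p) =
      (Finset.univ.filter fun p : Fin n × Fin n => p.1 < p.2 ∧ P p) ∪
      (Finset.univ.filter fun p : Fin n × Fin n => p.2 < p.1 ∧ P p) := by
    ext p
    simp only [Finset.mem_filter, Finset.mem_union, Finset.mem_univ, true_and,
      ne_iff_lt_or_gt, or_and_right, gt_iff_lt]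
  have hbij : (Finset.univ.filter fun p : Fin n × Fin n => p.2 < p.1 ∧ P p).card =
      (Finset.univ.filter fun p : Fin n × Fin n => p.1 < p.2 ∧ P p).card := by
    apply Finset.card_bij (fun p _ => p.swap)
    · intro p hp
      simp only [Finset.mem_filter, Finset.mem_univ, true_and] at hp ⊢
      exact ⟨hp.1, hP p hp.2⟩
    · intro a _ b _ h
      exact Prod.swap_injective h
    · intro b hb
      simp only [Finset.mem_filter, Finset.mem_univ, true_and] at hb ⊢
      exact ⟨b.swap, ⟨hb.1, hP b hb.2⟩, Prod.swap_swap b⟩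
  rw [hunion, Finset.card_union_of_disjoint hdisj, hbij]
  omega

lemma card_diag (n : ℕ) : (Finset.univ.filter fun p : Fin n × Fin n => p.1 = p.2).card = n := by
  have : (Finset.univ.filter fun p : Fin n × Fin n => p.1 = p.2) =
      Finset.univ.image (fun i : Fin n => (i, i)) := by
    ext p
    simp only [Finset.mem_filter, Finset.mem_univ, true_and, Finset.mem_image]
    constructor
    · intro h; exact ⟨p.1, Prod.ext rfl h⟩
    · rintro ⟨i, _, rfl⟩; rfl
  rw [this, Finset.card_image_of_injective _ (fun a b h => (Prod.ext_iff.mp h).1), Finset.card_univ,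
    Fintype.card_fin]


lemma sum_g {n r : ℕ} (σ : Fin n → Fin r) :
    ∑ u : Fin r, (Finset.univ.filter fun i => σ i = u).card = n := by
  have h := Finset.card_eq_sum_card_fiberwise (s := (Finset.univ : Finset (Fin n)))
    (t := (Finset.univ : Finset (Fin r))) (f := σ) (fun i _ => Finset.mem_univ (σ i))
  simpa using h.symm

lemma card_mono {n r : ℕ} (σ : Fin n → Fin r) :
    (Finset.univ.filter fun p : Fin n × Fin n => σ p.1 = σ p.2).card =
      ∑ u : Fin r, (Finset.univ.filter fun i => σ i = u).card *
        (Finset.univ.filter fun i => σ i = u).card := by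
  have h : (Finset.univ.filter fun p : Fin n × Fin n => σ p.1 = σ p.2) =
      Finset.univ.biUnion fun u : Fin r =>
        (Finset.univ.filter fun i => σ i = u) ×ˢ (Finset.univ.filter fun i => σ i = u) := by
    ext p
    simp only [Finset.mem_filter, Finset.mem_univ, true_and, Finset.mem_biUnion,
      Finset.mem_product]
    constructor
    · intro h; exact ⟨σ p.1, rfl, h.symm⟩
    · rintro ⟨u, h1, h2⟩; rw [h1, h2]
  rw [h, Finset.card_biUnion]
  · exact Finset.sum_congr rfl fun u _ => Finset.card_product _ _
  · intro u _ w _ huw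
    rw [Function.onFun, Finset.disjoint_left]
    intro p hp hq
    simp only [Finset.mem_product, Finset.mem_filter, Finset.mem_univ, true_and] at hp hq
    exact huw (hp.1.symm.trans hq.1)

lemma card_ne_mono {n r : ℕ} (σ : Fin n → Fin r) :
    (Finset.univ.filter fun p : Fin n × Fin n => p.1 ≠ p.2 ∧ σ p.1 = σ p.2).card + n =
      ∑ u : Fin r, (Finset.univ.filter fun i => σ i = u).card *
        (Finset.univ.filter fun i => σ i = u).card := by
  rw [← card_mono σ]
  have h := Finset.card_filter_add_card_filter_not
    (s := Finset.univ.filter fun p : Fin n × Fin n => σ p.1 = σ p.2)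
    (p := fun p => p.1 = p.2)
  rw [Finset.filter_filter, Finset.filter_filter] at h
  have h1 : (Finset.univ.filter fun p : Fin n × Fin n => σ p.1 = σ p.2 ∧ p.1 = p.2) =
      Finset.univ.filter fun p : Fin n × Fin n => p.1 = p.2 := by
    apply Finset.filter_congr
    intro p _
    constructor
    · exact fun h => h.2
    · exact fun h => ⟨by rw [h], h⟩
  have h2 : (Finset.univ.filter fun p : Fin n × Fin n => σ p.1 = σ p.2 ∧ ¬ p.1 = p.2) =
      Finset.univ.filter fun p : Fin n × Fin n => p.1 ≠ p.2 ∧ σ p.1 = σ p.2 := by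
    apply Finset.filter_congr
    intro p _
    exact and_comm
  rw [h1, h2, card_diag] at h
  omega

lemma sum_mul_sum_split {r : ℕ} (g : Fin r → ℕ) :
    (∑ u, g u) * (∑ u, g u) =
      ∑ u, g u * g u + ∑ u, ∑ w, (if u ≠ w then g u * g w else 0) := by
  rw [Finset.sum_mul_sum]
  have h : ∀ u : Fin r, ∀ w : Fin r, g u * g w =
      (if u = w then g u * g w else 0) + (if u ≠ w then g u * g w else 0) := by
    intro u w; by_cases h : u = w <;> simp [h]
  calc ∑ u, ∑ w, g u * g w
      = ∑ u, ∑ w, ((if u = w then g u * g w else 0) + (if u ≠ w then g u * g w else 0)) :=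
        Finset.sum_congr rfl fun u _ => Finset.sum_congr rfl fun w _ => h u w
    _ = ∑ u, ∑ w, (if u = w then g u * g w else 0)
        + ∑ u, ∑ w, (if u ≠ w then g u * g w else 0) := by
        rw [← Finset.sum_add_distrib]
        exact Finset.sum_congr rfl fun u _ => Finset.sum_add_distrib
    _ = _ := by
        congr 1
        exact Finset.sum_congr rfl fun u _ => by simp

lemma two_mul_lt_sum {r : ℕ} (g : Fin r → ℕ) :
    ∑ u : Fin r, ∑ w, (if u ≠ w then g u * g w else 0) =
      2 * ∑ u : Fin r, ∑ w, (if u < w then g u * g w else 0) := by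
  have h1 : ∀ u w : Fin r, (if u ≠ w then g u * g w else 0) =
      (if u < w then g u * g w else 0) + (if w < u then g u * g w else 0) := by
    intro u w
    rcases lt_trichotomy u w with h|h|h
    · simp [h, h.ne, asymm h]
    · simp [h, lt_irrefl]
    · simp [h, h.ne', asymm h]
  have h2 : ∑ u : Fin r, ∑ w, (if w < u then g u * g w else 0) =
      ∑ u : Fin r, ∑ w, (if u < w then g u * g w else 0) := by
    rw [Finset.sum_comm]
    exact Finset.sum_congr rfl fun u _ => Finset.sum_congr rfl fun w _ => by
      rw [mul_comm]
  calc ∑ u : Fin r, ∑ w, (if u ≠ w then g u * g w else 0)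
      = ∑ u : Fin r, ∑ w, ((if u < w then g u * g w else 0) + (if w < u then g u * g w else 0)) :=
        Finset.sum_congr rfl fun u _ => Finset.sum_congr rfl fun w _ => h1 u w
    _ = ∑ u : Fin r, ∑ w, (if u < w then g u * g w else 0)
        + ∑ u : Fin r, ∑ w, (if w < u then g u * g w else 0) := by
        rw [← Finset.sum_add_distrib]
        exact Finset.sum_congr rfl fun u _ => Finset.sum_add_distrib
    _ = _ := by rw [h2]; ring

lemma trace_eq {n d : ℕ} (M : Matrix (Fin n) (Fin n) ℝ) (X : Matrix (Fin n) (Fin d) ℝ) :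
    Matrix.trace (Xᵀ * M * X) = ∑ i, ∑ k, (dotProduct (X i) (X k)) * M k i := by
  rw [Matrix.trace_mul_comm, ← Matrix.mul_assoc]
  simp only [Matrix.trace, Matrix.diag, Matrix.mul_apply, Matrix.transpose_apply,
    dotProduct]

lemma sum_indicator_card {n : ℕ} (P : Fin n × Fin n → Prop) [DecidablePred P] :
    ∑ i : Fin n, ∑ k : Fin n, (if P (i, k) then (1:ℝ) else 0) =
      ((Finset.univ.filter P).card : ℝ) := by
  rw [← Finset.sum_product', Finset.univ_product_univ, Finset.sum_boole]

lemma sum_indicator_card' {n : ℕ} (P : Fin n → Fin n → Prop) [∀ i k, Decidable (P i k)] :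
    ∑ i : Fin n, ∑ k : Fin n, (if P i k then (1:ℝ) else 0) =
      ((Finset.univ.filter fun pp : Fin n × Fin n => P pp.1 pp.2).card : ℝ) := by
  rw [← Finset.sum_product', Finset.univ_product_univ, Finset.sum_boole]

/-- Key identity -/
theorem log_likelihood_diff_eq_trace_diff (n r d : ℕ) (hr : 2 ≤ r) (p q : ℝ)
    (hq : 0 < q) (hqp : q < p) (hp : p < 1)
    (v : Fin r → Fin d → ℝ)
    (hunit : ∀ i, dotProduct (v i) (v i) = 1)
    (hinner : ∀ i j, i ≠ j → dotProduct (v i) (v j) = -1 / ((r : ℝ) - 1))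
    (e : Fin n → Fin n → Prop) [DecidableRel e]
    (hsymm : Symmetric e) (hirr : Irreflexive e)
    (M : Matrix (Fin n) (Fin n) ℝ)
    (hM : ∀ i j, M i j = if i = j then 0 else
      if e i j then Real.log (p / q) else Real.log ((1 - p) / (1 - q)))
    (L : (Fin n → Fin r) → ℝ)
    (hL : ∀ σ, L σ =
      (eIn n r e σ : ℝ) * Real.log p
        + ((pIn n r σ : ℝ) - (eIn n r e σ : ℝ)) * Real.log (1 - p)
        + (eOut n r e σ : ℝ) * Real.log q
        + ((pOut n r σ : ℝ) - (eOut n r e σ : ℝ)) * Real.log (1 - q))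
    (σX σY : Fin n → Fin r)
    (X Y : Matrix (Fin n) (Fin d) ℝ)
    (hX : ∀ i, X i = v (σX i)) (hY : ∀ i, Y i = v (σY i)) :
    L σX - L σY = (((r : ℝ) - 1) / (2 * r)) *
      (Matrix.trace (Xᵀ * M * X) - Matrix.trace (Yᵀ * M * Y)) := by
  classical
  have hp0 : (0:ℝ) < p := lt_trans hq hqp
  have h1p : (0:ℝ) < 1 - p := by linarith
  have h1q : (0:ℝ) < 1 - q := by linarith
  set A := Real.log (p / q) with hA
  set B := Real.log ((1 - p) / (1 - q)) with hB
  have hAeq : A = Real.log p - Real.log q := Real.log_div (ne_of_gt hp0) (ne_of_gt hq)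
  have hBeq : B = Real.log (1 - p) - Real.log (1 - q) :=
    Real.log_div (ne_of_gt h1p) (ne_of_gt h1q)
  have hrR : (2:ℝ) ≤ (r:ℝ) := by exact_mod_cast hr
  have hr1 : (r:ℝ) - 1 ≠ 0 := by linarith
  have hr0 : (r:ℝ) ≠ 0 := by linarith
  set S0 : ℝ := ∑ i : Fin n, ∑ k : Fin n, M k i with hS0
  -- counting facts
  have hc1 : ∀ σ : Fin n → Fin r,
      (Finset.univ.filter fun pp : Fin n × Fin n =>
        pp.1 ≠ pp.2 ∧ (σ pp.1 = σ pp.2 ∧ e pp.1 pp.2)).card = 2 * eIn n r e σ := by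
    intro σ
    rw [card_ne_two_mul (fun pp : Fin n × Fin n => σ pp.1 = σ pp.2 ∧ e pp.1 pp.2)
      (fun pp h => ⟨h.1.symm, hsymm h.2⟩)]
    unfold eIn
    exact congrArg (fun s : Finset (Fin n × Fin n) => 2 * s.card)
      (Finset.filter_congr fun pp _ => by tauto)
  have hmono2 : ∀ σ : Fin n → Fin r,
      (Finset.univ.filter fun pp : Fin n × Fin n =>
        pp.1 ≠ pp.2 ∧ σ pp.1 = σ pp.2).card = 2 * pIn n r σ := by
    intro σ
    have h1 := card_ne_mono σ
    have ha : 2 * pIn n r σ =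
        ∑ u : Fin r, 2 * Nat.choose ((Finset.univ.filter fun i => σ i = u).card) 2 := by
      unfold pIn; rw [Finset.mul_sum]
    have hb : (∑ u : Fin r, 2 * Nat.choose ((Finset.univ.filter fun i => σ i = u).card) 2)
        + ∑ u : Fin r, (Finset.univ.filter fun i => σ i = u).card =
        ∑ u : Fin r, (Finset.univ.filter fun i => σ i = u).card *
          (Finset.univ.filter fun i => σ i = u).card := by
      rw [← Finset.sum_add_distrib]
      exact Finset.sum_congr rfl fun u _ => two_mul_choose_two_add _
    have hc := sum_g σ
    linarith [h1, ha, hb, hc]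
  have hc2 : ∀ σ : Fin n → Fin r,
      (Finset.univ.filter fun pp : Fin n × Fin n =>
        pp.1 ≠ pp.2 ∧ (σ pp.1 = σ pp.2 ∧ e pp.1 pp.2)).card
      + (Finset.univ.filter fun pp : Fin n × Fin n =>
        pp.1 ≠ pp.2 ∧ (σ pp.1 = σ pp.2 ∧ ¬ e pp.1 pp.2)).card = 2 * pIn n r σ := by
    intro σ
    rw [← hmono2 σ]
    have h := Finset.card_filter_add_card_filter_not
      (s := Finset.univ.filter fun pp : Fin n × Fin n => pp.1 ≠ pp.2 ∧ σ pp.1 = σ pp.2)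
      (p := fun pp => e pp.1 pp.2)
    rw [Finset.filter_filter, Finset.filter_filter] at h
    rw [← h]
    congr 1 <;> exact congrArg Finset.card (Finset.filter_congr fun pp _ => by tauto)
  -- key trace formula
  have key : ∀ (σ : Fin n → Fin r) (Z : Matrix (Fin n) (Fin d) ℝ), (∀ i, Z i = v (σ i)) →
      (((r:ℝ) - 1) / (2 * r)) * Matrix.trace (Zᵀ * M * Z) =
        A * (eIn n r e σ : ℝ) + B * ((pIn n r σ : ℝ) - (eIn n r e σ : ℝ))
          - (1 / (2 * (r:ℝ))) * S0 := by
    intro σ Z hZ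
    have hdot : ∀ i k : Fin n, dotProduct (Z i) (Z k) =
        if σ i = σ k then (1:ℝ) else -1 / ((r:ℝ) - 1) := by
      intro i k
      rw [hZ i, hZ k]
      by_cases h : σ i = σ k
      · rw [if_pos h, h, hunit]
      · rw [if_neg h, hinner _ _ h]
    have htr : Matrix.trace (Zᵀ * M * Z) =
        ((r:ℝ) / ((r:ℝ) - 1)) * (∑ i, ∑ k, (if σ i = σ k then (1:ℝ) else 0) * M k i)
        - (1 / ((r:ℝ) - 1)) * S0 := by
      rw [trace_eq, hS0, Finset.mul_sum, Finset.mul_sum, ← Finset.sum_sub_distrib]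
      apply Finset.sum_congr rfl
      intro i _
      rw [Finset.mul_sum, Finset.mul_sum, ← Finset.sum_sub_distrib]
      apply Finset.sum_congr rfl
      intro k _
      rw [hdot i k]
      by_cases h : σ i = σ k
      · rw [if_pos h, if_pos h]
        field_simp
      · rw [if_neg h, if_neg h]
        field_simp
        ring
    have hS1 : (∑ i, ∑ k, (if σ i = σ k then (1:ℝ) else 0) * M k i) =
        A * (2 * (eIn n r e σ : ℝ)) + B * (2 * (pIn n r σ : ℝ) - 2 * (eIn n r e σ : ℝ)) := by
      have hpt : ∀ i k : Fin n, (if σ i = σ k then (1:ℝ) else 0) * M k i =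
          A * (if i ≠ k ∧ (σ i = σ k ∧ e i k) then (1:ℝ) else 0)
          + B * (if i ≠ k ∧ (σ i = σ k ∧ ¬ e i k) then (1:ℝ) else 0) := by
        intro i k
        rw [hM k i]
        by_cases hik : i = k
        · subst hik
          simp
        · have hki : ¬ k = i := fun h => hik h.symm
          by_cases hm : σ i = σ k
          · by_cases he : e i k
            · have hek : e k i := hsymm he
              simp [hik, hki, hm, he, hek]
            · have hek : ¬ e k i := fun h => he (hsymm h)
              simp [hik, hki, hm, he, hek]
          · simp [hki, hm]
      calc (∑ i, ∑ k, (if σ i = σ k then (1:ℝ) else 0) * M k i)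
          = ∑ i, ∑ k,
            (A * (if i ≠ k ∧ (σ i = σ k ∧ e i k) then (1:ℝ) else 0)
            + B * (if i ≠ k ∧ (σ i = σ k ∧ ¬ e i k) then (1:ℝ) else 0)) :=
            Finset.sum_congr rfl fun i _ => Finset.sum_congr rfl fun k _ => hpt i k
        _ = A * (∑ i, ∑ k, (if i ≠ k ∧ (σ i = σ k ∧ e i k) then (1:ℝ) else 0))
            + B * (∑ i, ∑ k, (if i ≠ k ∧ (σ i = σ k ∧ ¬ e i k) then (1:ℝ) else 0)) := by
            rw [Finset.mul_sum, Finset.mul_sum, ← Finset.sum_add_distrib]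
            refine Finset.sum_congr rfl fun i _ => ?_
            rw [Finset.mul_sum, Finset.mul_sum, ← Finset.sum_add_distrib]
        _ = _ := by
            rw [sum_indicator_card', sum_indicator_card']
            have e1 := hc1 σ
            have e2 := hc2 σ
            have e1' : ((Finset.univ.filter fun pp : Fin n × Fin n =>
                pp.1 ≠ pp.2 ∧ (σ pp.1 = σ pp.2 ∧ e pp.1 pp.2)).card : ℝ)
                = 2 * (eIn n r e σ : ℝ) := by exact_mod_cast congrArg Nat.cast e1
            have e2' : ((Finset.univ.filter fun pp : Fin n × Fin n =>
                pp.1 ≠ pp.2 ∧ (σ pp.1 = σ pp.2 ∧ ¬ e pp.1 pp.2)).card : ℝ)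
                = 2 * (pIn n r σ : ℝ) - 2 * (eIn n r e σ : ℝ) := by
              have : (Finset.univ.filter fun pp : Fin n × Fin n =>
                pp.1 ≠ pp.2 ∧ (σ pp.1 = σ pp.2 ∧ ¬ e pp.1 pp.2)).card
                = 2 * pIn n r σ - 2 * eIn n r e σ := by omega
              rw [this]
              have hle : 2 * eIn n r e σ ≤ 2 * pIn n r σ := by omega
              push_cast [Nat.cast_sub hle]
              ring
            rw [e1', e2']
    rw [htr, hS1]
    field_simp
  -- totals are labeling-independent
  have hEtot : eIn n r e σX + eOut n r e σX = eIn n r e σY + eOut n r e σY := by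
    have h : ∀ σ : Fin n → Fin r, eIn n r e σ + eOut n r e σ =
        (Finset.univ.filter fun pp : Fin n × Fin n => pp.1 < pp.2 ∧ e pp.1 pp.2).card := by
      intro σ
      unfold eIn eOut
      have h := Finset.card_filter_add_card_filter_not
        (s := Finset.univ.filter fun pp : Fin n × Fin n => pp.1 < pp.2 ∧ e pp.1 pp.2)
        (p := fun pp => σ pp.1 = σ pp.2)
      rw [Finset.filter_filter, Finset.filter_filter] at h
      rw [← h]
      congr 1 <;> exact congrArg Finset.card (Finset.filter_congr fun pp _ => by tauto)
    rw [h σX, h σY]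
  have hPtot : pIn n r σX + pOut n r σX = pIn n r σY + pOut n r σY := by
    have h : ∀ σ : Fin n → Fin r, 2 * (pIn n r σ + pOut n r σ) + n = n * n := by
      intro σ
      set g : Fin r → ℕ := fun u => (Finset.univ.filter fun i => σ i = u).card with hg
      have ha : 2 * pIn n r σ = ∑ u, 2 * Nat.choose (g u) 2 := by
        unfold pIn; rw [Finset.mul_sum]
      have hb : (∑ u, 2 * Nat.choose (g u) 2) + ∑ u, g u = ∑ u, g u * g u := by
        rw [← Finset.sum_add_distrib]
        exact Finset.sum_congr rfl fun u _ => two_mul_choose_two_add _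
      have hgn := sum_g σ
      have h2pOut : 2 * pOut n r σ = ∑ u, ∑ w, (if u ≠ w then g u * g w else 0) := by
        rw [two_mul_lt_sum g]
        rfl
      have hsq := sum_mul_sum_split g
      rw [sum_g σ] at hsq
      linarith [ha, hb, hgn, h2pOut, hsq]
    have hX' := h σX
    have hY' := h σY
    omega
  -- final assembly
  have kX := key σX X hX
  have kY := key σY Y hY
  rw [hL σX, hL σY, mul_sub, kX, kY, hAeq, hBeq]
  have hE' : (eIn n r e σX : ℝ) + (eOut n r e σX : ℝ)
      = (eIn n r e σY : ℝ) + (eOut n r e σY : ℝ) := by exact_mod_cast hEtot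
  have hP' : (pIn n r σX : ℝ) + (pOut n r σX : ℝ)
      = (pIn n r σY : ℝ) + (pOut n r σY : ℝ) := by exact_mod_cast hPtot
  linear_combination (Real.log q - Real.log (1 - q)) * hE' + Real.log (1 - q) * hP'
end

section
/- (Corollary 1, semi-supervised likelihood) Under SBM(n,r,p,q), condition on the modified adjacency matrix M and on the labels X_L of a fixed subset L of k nodes. Then for any two labelings X_U, Y_U ∈ Δ_r^{n-k} of the remaining nodes, ℙ[X_U | M, X_L] / ℙ[Y_U | M, X_L] = exp( ((r-1)/(2r)) ( Tr([X_U; X_L]^T M [X_U; X_L]) − Tr([Y_U; X_L]^T M [Y_U; X_L]) ) ), where [X_U; X_L] denotes the full n×d vector-label matrix combining unsupervised and supervised labels. -/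
open Matrix

/-- Semi-supervised posterior of the unsupervised labeling σU given the graph and the
supervised labels σL (with the first m nodes unsupervised and the last k supervised;
the uniform prior on σU cancels in the normalization). -/
noncomputable def condPosterior (m k r : ℕ) (p q : ℝ)
    (G : Fin (m + k) → Fin (m + k) → Prop) [DecidableRel G]
    (σL : Fin k → Fin r) (σU : Fin m → Fin r) : ℝ :=
  SBMlikelihood (m + k) r p q G (Fin.append σU σL) /
    ∑ τU : Fin m → Fin r, SBMlikelihood (m + k) r p q G (Fin.append τU σL)

/-- auxiliary: log of the SBM likelihood as a pair sum -/
noncomputable def logLik (n r : ℕ) (p q : ℝ) (G : Fin n → Fin n → Prop)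
    [DecidableRel G] (σ : Fin n → Fin r) : ℝ :=
  ∑ i : Fin n, ∑ j : Fin n,
    if i < j then
      Real.log (if G i j then (if σ i = σ j then p else q)
       else (if σ i = σ j then 1 - p else 1 - q))
    else 0

/-- auxiliary: sum of M over monochromatic ordered pairs i < j -/
noncomputable def pairSum (n r : ℕ) (M : Matrix (Fin n) (Fin n) ℝ)
    (σ : Fin n → Fin r) : ℝ :=
  ∑ i : Fin n, ∑ j : Fin n, if i < j then (if σ i = σ j then M i j else 0) else 0

lemma SBM_eq_exp_logLik (n r : ℕ) (p q : ℝ) (hq : 0 < q) (hqp : q < p) (hp : p < 1)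
    (G : Fin n → Fin n → Prop) [DecidableRel G] (σ : Fin n → Fin r) :
    SBMlikelihood n r p q G σ = Real.exp (logLik n r p q G σ) := by
  have hp0 : 0 < p := hq.trans hqp
  have hq1 : q < 1 := hqp.trans hp
  have h1p : (0:ℝ) < 1 - p := by linarith
  have h1q : (0:ℝ) < 1 - q := by linarith
  rw [SBMlikelihood, logLik, Real.exp_sum]
  refine Finset.prod_congr rfl fun i _ => ?_
  rw [Real.exp_sum]
  refine Finset.prod_congr rfl fun j _ => ?_
  split_ifs <;>
    simp [Real.exp_log hp0, Real.exp_log hq, Real.exp_log h1p, Real.exp_log h1q]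

lemma double_sum_symm {n : ℕ} (F : Fin n → Fin n → ℝ)
    (hs : ∀ a b, F a b = F b a) (hd : ∀ a, F a a = 0) :
    ∑ a : Fin n, ∑ b : Fin n, F a b
      = 2 * ∑ a : Fin n, ∑ b : Fin n, (if a < b then F a b else 0) := by
  have h1 : ∀ a b : Fin n, F a b
      = (if a < b then F a b else 0) + (if b < a then F a b else 0) := by
    intro a b
    rcases lt_trichotomy a b with h | h | h
    · rw [if_pos h, if_neg (lt_asymm h), add_zero]
    · subst h; simp [hd]
    · rw [if_neg (lt_asymm h), if_pos h, zero_add]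
  calc ∑ a : Fin n, ∑ b : Fin n, F a b
      = ∑ a : Fin n, ∑ b : Fin n,
          ((if a < b then F a b else 0) + (if b < a then F a b else 0)) :=
        Finset.sum_congr rfl fun a _ => Finset.sum_congr rfl fun b _ => h1 a b
    _ = (∑ a : Fin n, ∑ b : Fin n, (if a < b then F a b else 0))
        + ∑ a : Fin n, ∑ b : Fin n, (if b < a then F a b else 0) := by
        simp [Finset.sum_add_distrib]
    _ = (∑ a : Fin n, ∑ b : Fin n, (if a < b then F a b else 0))
        + ∑ b : Fin n, ∑ a : Fin n, (if b < a then F a b else 0) := by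
        congr 1
        exact Finset.sum_comm
    _ = (∑ a : Fin n, ∑ b : Fin n, (if a < b then F a b else 0))
        + ∑ a : Fin n, ∑ b : Fin n, (if a < b then F a b else 0) := by
        congr 1
        exact Finset.sum_congr rfl fun a _ => Finset.sum_congr rfl fun b _ => by
          rw [hs]
    _ = 2 * ∑ a : Fin n, ∑ b : Fin n, (if a < b then F a b else 0) := (two_mul _).symm

lemma trace_form {n d : ℕ} (M : Matrix (Fin n) (Fin n) ℝ)
    (Z : Matrix (Fin n) (Fin d) ℝ) :
    Matrix.trace (Zᵀ * M * Z)
      = ∑ a : Fin n, ∑ b : Fin n, M a b * dotProduct (Z a) (Z b) := by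
  calc Matrix.trace (Zᵀ * M * Z)
      = ∑ c : Fin d, ∑ b : Fin n, ∑ a : Fin n, Z a c * M a b * Z b c := by
        simp [Matrix.trace, Matrix.diag, Matrix.mul_apply, Matrix.transpose_apply,
          Finset.sum_mul]
    _ = ∑ b : Fin n, ∑ c : Fin d, ∑ a : Fin n, Z a c * M a b * Z b c := by
        rw [Finset.sum_comm]
    _ = ∑ b : Fin n, ∑ a : Fin n, ∑ c : Fin d, Z a c * M a b * Z b c :=
        Finset.sum_congr rfl fun b _ => Finset.sum_comm
    _ = ∑ a : Fin n, ∑ b : Fin n, ∑ c : Fin d, Z a c * M a b * Z b c := by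
        rw [Finset.sum_comm]
    _ = ∑ a : Fin n, ∑ b : Fin n, M a b * dotProduct (Z a) (Z b) := by
        refine Finset.sum_congr rfl fun a _ => Finset.sum_congr rfl fun b _ => ?_
        rw [dotProduct, Finset.mul_sum]
        exact Finset.sum_congr rfl fun c _ => by ring

/-- Corollary 1 (semi-supervised likelihood): the ratio of conditional posteriors of two
labelings of the unsupervised nodes equals
exp(((r-1)/(2r))(Tr([X_U;X_L]ᵀ M [X_U;X_L]) − Tr([Y_U;X_L]ᵀ M [Y_U;X_L]))). -/
theorem semi_supervised_posterior_ratio (m k r d : ℕ) (hr : 2 ≤ r) (p q : ℝ)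
    (hq : 0 < q) (hqp : q < p) (hp : p < 1)
    (v : Fin r → Fin d → ℝ)
    (hunit : ∀ i, dotProduct (v i) (v i) = 1)
    (hinner : ∀ i j, i ≠ j → dotProduct (v i) (v j) = -1 / ((r : ℝ) - 1))
    (G : Fin (m + k) → Fin (m + k) → Prop) [DecidableRel G]
    (hsymm : Symmetric G) (hirr : Irreflexive G)
    (M : Matrix (Fin (m + k)) (Fin (m + k)) ℝ)
    (hM : ∀ i j, M i j = if i = j then 0 else
      if G i j then Real.log (p / q) else Real.log ((1 - p) / (1 - q)))
    (σL : Fin k → Fin r) (σXU σYU : Fin m → Fin r)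
    (X Y : Matrix (Fin (m + k)) (Fin d) ℝ)
    (hX : ∀ i, X i = v (Fin.append σXU σL i))
    (hY : ∀ i, Y i = v (Fin.append σYU σL i)) :
    condPosterior m k r p q G σL σXU / condPosterior m k r p q G σL σYU
      = Real.exp ((((r : ℝ) - 1) / (2 * r)) *
          (Matrix.trace (Xᵀ * M * X) - Matrix.trace (Yᵀ * M * Y))) := by
  have hp0 : 0 < p := hq.trans hqp
  have hq1 : q < 1 := hqp.trans hp
  have h1p : (0:ℝ) < 1 - p := by linarith
  have h1q : (0:ℝ) < 1 - q := by linarith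
  have hr1 : (1:ℝ) < (r:ℝ) := by exact_mod_cast lt_of_lt_of_le one_lt_two hr
  have hrne : (r:ℝ) - 1 ≠ 0 := by linarith
  have hr0 : (r:ℝ) ≠ 0 := by linarith
  have hMd : ∀ a : Fin (m + k), M a a = 0 := fun a => by rw [hM a a, if_pos rfl]
  have hMs : ∀ a b : Fin (m + k), M a b = M b a := by
    intro a b
    rw [hM a b, hM b a]
    by_cases hab : a = b
    · simp [hab]
    · rw [if_neg hab, if_neg (Ne.symm hab)]
      by_cases hG : G a b
      · rw [if_pos hG, if_pos (hsymm hG)]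
      · rw [if_neg hG, if_neg (fun h => hG (hsymm h))]
  -- decomposition of logLik
  have hlogdec : ∀ σ : Fin (m + k) → Fin r,
      logLik (m + k) r p q G σ
        = (∑ i : Fin (m + k), ∑ j : Fin (m + k),
            if i < j then (if G i j then Real.log q else Real.log (1 - q)) else 0)
          + pairSum (m + k) r M σ := by
    intro σ
    rw [logLik, pairSum, ← Finset.sum_add_distrib]
    refine Finset.sum_congr rfl fun i _ => ?_
    rw [← Finset.sum_add_distrib]
    refine Finset.sum_congr rfl fun j _ => ?_
    by_cases hij : i < j
    · rw [if_pos hij, if_pos hij, if_pos hij, hM i j, if_neg (Fin.ne_of_lt hij)]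
      by_cases hG : G i j
      · rw [if_pos hG, if_pos hG, if_pos hG]
        by_cases hs : σ i = σ j
        · rw [if_pos hs, if_pos hs, Real.log_div hp0.ne' hq.ne']; ring
        · rw [if_neg hs, if_neg hs, add_zero]
      · rw [if_neg hG, if_neg hG, if_neg hG]
        by_cases hs : σ i = σ j
        · rw [if_pos hs, if_pos hs, Real.log_div h1p.ne' h1q.ne']; ring
        · rw [if_neg hs, if_neg hs, add_zero]
    · rw [if_neg hij, if_neg hij, if_neg hij, add_zero]
  -- trace decomposition
  have htr : ∀ (Z : Matrix (Fin (m + k)) (Fin d) ℝ) (σ : Fin (m + k) → Fin r),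
      (∀ i, Z i = v (σ i)) →
      Matrix.trace (Zᵀ * M * Z)
        = (∑ a : Fin (m + k), ∑ b : Fin (m + k), M a b * (-1 / ((r:ℝ) - 1)))
          + ((r:ℝ) / ((r:ℝ) - 1)) * (2 * pairSum (m + k) r M σ) := by
    intro Z σ hZ
    have key : (∑ a : Fin (m + k), ∑ b : Fin (m + k),
          (if σ a = σ b then M a b else 0))
        = 2 * ∑ a : Fin (m + k), ∑ b : Fin (m + k),
            (if a < b then (if σ a = σ b then M a b else 0) else 0) :=
      double_sum_symm _
        (fun a b => by
          by_cases hs : σ a = σ b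
          · rw [if_pos hs, if_pos hs.symm, hMs]
          · rw [if_neg hs, if_neg (fun h => hs h.symm)])
        (fun a => by rw [if_pos rfl, hMd])
    have hps : pairSum (m + k) r M σ
        = ∑ a : Fin (m + k), ∑ b : Fin (m + k),
            (if a < b then (if σ a = σ b then M a b else 0) else 0) := rfl
    rw [trace_form]
    calc ∑ a : Fin (m + k), ∑ b : Fin (m + k), M a b * dotProduct (Z a) (Z b)
        = ∑ a : Fin (m + k), ∑ b : Fin (m + k),
            (M a b * (-1 / ((r:ℝ) - 1))
              + (if σ a = σ b then ((r:ℝ) / ((r:ℝ) - 1)) * M a b else 0)) := by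
          refine Finset.sum_congr rfl fun a _ => Finset.sum_congr rfl fun b _ => ?_
          rw [hZ a, hZ b]
          by_cases hs : σ a = σ b
          · rw [if_pos hs, hs, hunit]
            field_simp
            ring
          · rw [if_neg hs, hinner _ _ hs, add_zero]
      _ = (∑ a : Fin (m + k), ∑ b : Fin (m + k), M a b * (-1 / ((r:ℝ) - 1)))
          + ∑ a : Fin (m + k), ∑ b : Fin (m + k),
              (if σ a = σ b then ((r:ℝ) / ((r:ℝ) - 1)) * M a b else 0) := by
          simp [Finset.sum_add_distrib]
      _ = (∑ a : Fin (m + k), ∑ b : Fin (m + k), M a b * (-1 / ((r:ℝ) - 1)))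
          + ((r:ℝ) / ((r:ℝ) - 1)) * ∑ a : Fin (m + k), ∑ b : Fin (m + k),
              (if σ a = σ b then M a b else 0) := by
          simp [Finset.mul_sum, mul_ite]
      _ = (∑ a : Fin (m + k), ∑ b : Fin (m + k), M a b * (-1 / ((r:ℝ) - 1)))
          + ((r:ℝ) / ((r:ℝ) - 1)) * (2 * pairSum (m + k) r M σ) := by
          rw [key, hps]
  -- the normalizing sum is positive
  haveI : Nonempty (Fin r) := ⟨⟨0, by omega⟩⟩
  have hD : (0:ℝ) < ∑ τU : Fin m → Fin r,
      SBMlikelihood (m + k) r p q G (Fin.append τU σL) := by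
    refine Finset.sum_pos (fun τ _ => ?_) Finset.univ_nonempty
    rw [SBM_eq_exp_logLik (m + k) r p q hq hqp hp G]
    exact Real.exp_pos _
  rw [condPosterior, condPosterior, div_div_div_comm, div_self hD.ne', div_one,
    SBM_eq_exp_logLik (m + k) r p q hq hqp hp G,
    SBM_eq_exp_logLik (m + k) r p q hq hqp hp G, ← Real.exp_sub]
  congr 1
  rw [hlogdec, hlogdec, htr X _ hX, htr Y _ hY]
  field_simp
  ring
end

section
/- (Theorem 3, single-node conditional distribution) Under SBM(n,r,p,q), fix the modified adjacency matrix M, supervised labels X_L, and the labels X_{U¬i} of all remaining unsupervised nodes except node i. Then for any X_i ∈ Δ_r, ℙ[X_i | M, X_L, X_{U¬i}] = exp( ((r-1)/r) M_i [X_{U¬i}; X_L] X_i^T ) / Σ_{X_j ∈ Δ_r} exp( ((r-1)/r) M_i [X_{U¬i}; X_L] X_j^T ), where M_i is the i-th row of M with the (i,i) entry removed. -/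
open Matrix

/-- Theorem 3 (single-node conditional distribution): the conditional probability that
node i receives label a, given the graph and all other node labels, equals
exp(((r-1)/r) Σ_{j≠i} M_{ij}⟨X_j, v_a⟩) / Σ_b exp(((r-1)/r) Σ_{j≠i} M_{ij}⟨X_j, v_b⟩). -/
theorem single_node_conditional (n r d : ℕ) (hr : 2 ≤ r) (p q : ℝ)
    (hq : 0 < q) (hqp : q < p) (hp : p < 1)
    (v : Fin r → Fin d → ℝ)
    (hunit : ∀ i, dotProduct (v i) (v i) = 1)
    (hinner : ∀ i j, i ≠ j → dotProduct (v i) (v j) = -1 / ((r : ℝ) - 1))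
    (G : Fin n → Fin n → Prop) [DecidableRel G]
    (hsymm : Symmetric G) (hirr : Irreflexive G)
    (M : Matrix (Fin n) (Fin n) ℝ)
    (hM : ∀ i j, M i j = if i = j then 0 else
      if G i j then Real.log (p / q) else Real.log ((1 - p) / (1 - q)))
    (σ : Fin n → Fin r) (i : Fin n) (a : Fin r) :
    SBMlikelihood n r p q G (Function.update σ i a) /
        (∑ b : Fin r, SBMlikelihood n r p q G (Function.update σ i b))
      = Real.exp ((((r : ℝ) - 1) / r) *
            ∑ j : Fin n, (if j = i then 0 else
              M i j * dotProduct (v (σ j)) (v a))) /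
          ∑ b : Fin r, Real.exp ((((r : ℝ) - 1) / r) *
            ∑ j : Fin n, (if j = i then 0 else
              M i j * dotProduct (v (σ j)) (v b))) := by
  classical
  have hrR : (2:ℝ) ≤ (r:ℝ) := by exact_mod_cast hr
  have hr0 : (r:ℝ) ≠ 0 := by linarith
  have hr1 : (r:ℝ) - 1 ≠ 0 := by linarith
  have hq1 : (0:ℝ) < 1 - q := by linarith
  have hp0 : (0:ℝ) < p := lt_trans hq hqp
  have hp1 : (0:ℝ) < 1 - p := by linarith
  set ind : Fin n → Fin r → ℝ := fun j b => if σ j = b then 1 else 0 with hind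
  set S : Fin r → ℝ := fun b => ∑ j ∈ ({i}ᶜ : Finset (Fin n)), M i j * ind j b with hS
  set T : ℝ := ∑ j ∈ ({i}ᶜ : Finset (Fin n)), M i j / r with hT
  -- RHS exponents
  have hR : ∀ b : Fin r, (((r : ℝ) - 1) / r) *
      ∑ j : Fin n, (if j = i then 0 else M i j * dotProduct (v (σ j)) (v b))
      = S b - T := by
    intro b
    have h1 : ∑ j : Fin n, (if j = i then 0 else M i j * dotProduct (v (σ j)) (v b))
        = ∑ j ∈ ({i}ᶜ : Finset (Fin n)), M i j * dotProduct (v (σ j)) (v b) := by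
      rw [Fintype.sum_eq_add_sum_compl i
        (fun j => if j = i then 0 else M i j * dotProduct (v (σ j)) (v b))]
      rw [if_pos rfl, zero_add]
      exact Finset.sum_congr rfl fun j hj => if_neg (by simpa using hj)
    rw [h1, hS, hT, Finset.mul_sum, ← Finset.sum_sub_distrib]
    refine Finset.sum_congr rfl fun j hj => ?_
    by_cases hb : σ j = b
    · rw [hb, hunit]
      simp only [ind, if_pos hb]
      field_simp
    · rw [hinner _ _ hb]
      simp only [ind, if_neg hb]
      field_simp
      ring
  -- constants
  set c : Fin n → ℝ := fun j => if G i j then q else 1 - q with hc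
  set f0 : Fin n → Fin n → ℝ := fun k j => if k < j then
      (if G k j then (if σ k = σ j then p else q)
       else (if σ k = σ j then 1 - p else 1 - q)) else 1 with hf0
  set C : ℝ := (∏ j ∈ ({i}ᶜ : Finset (Fin n)), c j) *
      ∏ k ∈ ({i}ᶜ : Finset (Fin n)), ∏ j ∈ ({i}ᶜ : Finset (Fin n)), f0 k j with hC
  have hCpos : 0 < C := by
    refine mul_pos (Finset.prod_pos fun j _ => ?_) (Finset.prod_pos fun k _ =>
      Finset.prod_pos fun j _ => ?_)
    · dsimp only [c]; split <;> positivity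
    · dsimp only [f0]; split
      · split <;> split <;> linarith
      · norm_num
  -- key factorization of the likelihood
  have hL : ∀ b : Fin r, SBMlikelihood n r p q G (Function.update σ i b)
      = C * Real.exp (S b) := by
    intro b
    set σ' : Fin n → Fin r := Function.update σ i b with hσ'
    have hσi : σ' i = b := Function.update_self i b σ
    have hσj : ∀ j : Fin n, j ≠ i → σ' j = σ j := fun j hj => Function.update_of_ne hj b σ
    set F : Fin n → Fin n → ℝ := fun k j => if k < j then
        (if G k j then (if σ' k = σ' j then p else q)
         else (if σ' k = σ' j then 1 - p else 1 - q)) else 1 with hF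
    have hlik : SBMlikelihood n r p q G σ' = ∏ k : Fin n, ∏ j : Fin n, F k j := rfl
    have hpair : ∀ j ∈ ({i}ᶜ : Finset (Fin n)), F i j * F j i
        = c j * Real.exp (M i j * ind j b) := by
      intro j hj
      have hji : j ≠ i := by simpa using hj
      have hGji : G j i ↔ G i j := ⟨fun h => hsymm h, fun h => hsymm h⟩
      have hexp : (if G i j then (if b = σ j then p else q)
          else (if b = σ j then 1 - p else 1 - q))
          = c j * Real.exp (M i j * ind j b) := by
        dsimp only [c, ind]
        rw [hM i j, if_neg (Ne.symm hji)]
        by_cases hG : G i j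
        · simp only [if_pos hG]
          by_cases hb : σ j = b
          · simp only [if_pos hb, if_pos hb.symm, mul_one,
              Real.exp_log (div_pos hp0 hq)]
            field_simp
          · simp only [if_neg hb, if_neg (fun h : b = σ j => hb h.symm), mul_zero,
              Real.exp_zero, mul_one]
        · simp only [if_neg hG]
          by_cases hb : σ j = b
          · simp only [if_pos hb, if_pos hb.symm, mul_one,
              Real.exp_log (div_pos hp1 hq1)]
            field_simp
          · simp only [if_neg hb, if_neg (fun h : b = σ j => hb h.symm), mul_zero,
              Real.exp_zero, mul_one]
      rcases lt_or_gt_of_ne (Ne.symm hji) with hlt | hlt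
      · have h1 : F j i = 1 := by
          dsimp only [F]; rw [if_neg (not_lt.mpr hlt.le)]
        rw [h1, mul_one]
        dsimp only [F]
        rw [if_pos hlt, hσi, hσj j hji]
        exact hexp
      · have h1 : F i j = 1 := by
          dsimp only [F]; rw [if_neg (not_lt.mpr hlt.le)]
        rw [h1, one_mul]
        dsimp only [F]
        rw [if_pos hlt, hσi, hσj j hji, ← hexp]
        by_cases hG : G i j
        · rw [if_pos (hGji.mpr hG), if_pos hG]
          by_cases hb : σ j = b
          · rw [if_pos hb, if_pos hb.symm]
          · rw [if_neg hb, if_neg (fun h => hb h.symm)]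
        · rw [if_neg (fun h => hG (hGji.mp h)), if_neg hG]
          by_cases hb : σ j = b
          · rw [if_pos hb, if_pos hb.symm]
          · rw [if_neg hb, if_neg (fun h => hb h.symm)]
    calc SBMlikelihood n r p q G σ'
        = (∏ j : Fin n, F i j) * ∏ k ∈ ({i}ᶜ : Finset (Fin n)), ∏ j : Fin n, F k j := by
          rw [hlik, Fintype.prod_eq_mul_prod_compl i]
      _ = (∏ j ∈ ({i}ᶜ : Finset (Fin n)), F i j) *
          ((∏ k ∈ ({i}ᶜ : Finset (Fin n)), F k i) *
           ∏ k ∈ ({i}ᶜ : Finset (Fin n)), ∏ j ∈ ({i}ᶜ : Finset (Fin n)), F k j) := by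
          congr 1
          · rw [Fintype.prod_eq_mul_prod_compl i (F i)]
            have : F i i = 1 := by dsimp only [F]; rw [if_neg (lt_irrefl i)]
            rw [this, one_mul]
          · rw [← Finset.prod_mul_distrib]
            refine Finset.prod_congr rfl fun k hk => ?_
            rw [Fintype.prod_eq_mul_prod_compl i (F k)]
      _ = ((∏ j ∈ ({i}ᶜ : Finset (Fin n)), F i j * F j i)) *
          ∏ k ∈ ({i}ᶜ : Finset (Fin n)), ∏ j ∈ ({i}ᶜ : Finset (Fin n)), F k j := by
          rw [Finset.prod_mul_distrib]; ring
      _ = ((∏ j ∈ ({i}ᶜ : Finset (Fin n)), c j * Real.exp (M i j * ind j b))) *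
          ∏ k ∈ ({i}ᶜ : Finset (Fin n)), ∏ j ∈ ({i}ᶜ : Finset (Fin n)), f0 k j := by
          congr 1
          · exact Finset.prod_congr rfl hpair
          · refine Finset.prod_congr rfl fun k hk => Finset.prod_congr rfl fun j hj => ?_
            dsimp only [F, f0]
            rw [hσj k (by simpa using hk), hσj j (by simpa using hj)]
      _ = C * Real.exp (S b) := by
          rw [Finset.prod_mul_distrib, ← Real.exp_sum, hC, hS]
          ring
  -- denominators nonzero
  have hsumE : (0:ℝ) < ∑ b : Fin r, Real.exp (S b) := by
    have : Nonempty (Fin r) := ⟨⟨0, by omega⟩⟩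
    exact Finset.sum_pos (fun b _ => Real.exp_pos _) Finset.univ_nonempty
  -- conclude
  have hLHS : SBMlikelihood n r p q G (Function.update σ i a) /
      (∑ b : Fin r, SBMlikelihood n r p q G (Function.update σ i b))
      = Real.exp (S a) / ∑ b : Fin r, Real.exp (S b) := by
    simp only [hL]
    rw [← Finset.mul_sum, mul_div_mul_left _ _ (ne_of_gt hCpos)]
  rw [hLHS]
  simp only [hR, Real.exp_sub]
  rw [← Finset.sum_div]
  rw [div_div_div_eq]
  rw [mul_comm (Real.exp (S a)) (Real.exp T), mul_div_mul_left _ _ (Real.exp_pos T).ne']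
end
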